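/- Let d ≥ 1 be an integer, α ∈ (0, d), and let r, p satisfy α ≤ r, 1 < r < p ≤ d. Let γ > 0 satisfy (1+γ)r ≤ p, 1 + γr' ≤ p and r ≥ 1 + γ, where r' = r/(r-1). Let b : ℝ^d → [0,∞) be measurable, f ∈ L^r(ℝ^d) with f ≥ 0, and set v = R_α f. Then ∥R_α(b^r v^{r-1})∥_{L^{r'}(ℝ^d)} ≤ (∫_{ℝ^d} b^{r - γ r'} v^r R_α[(R_α(b^{(1+γ)r}))^{1/(r-1)}] dx)^{(r-1)/r}. -/

import Mathlib

open MeasureTheory Metric ENNReal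
open scoped FourierTransform

/-- Riesz potential of an `ℝ≥0∞`-valued function:
`R_α g (x) = ∫ g(x+y) |y|^(α-d) dy`. -/
noncomputable def riesz {d : ℕ} (α : ℝ) (g : EuclideanSpace ℝ (Fin d) → ℝ≥0∞)
    (x : EuclideanSpace ℝ (Fin d)) : ℝ≥0∞ :=
  ∫⁻ y, g (x + y) * ENNReal.ofReal (‖y‖ ^ (α - (d : ℝ)))

/-- Riesz potential of a real-valued function. -/
noncomputable def rieszR {d : ℕ} (α : ℝ) (f : EuclideanSpace ℝ (Fin d) → ℝ)
    (x : EuclideanSpace ℝ (Fin d)) : ℝ :=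
  ∫ y, f (x + y) * ‖y‖ ^ (α - (d : ℝ))

/-- Hardy–Littlewood maximal function: sup over balls containing `x`
of the average of `g` over the ball. -/
noncomputable def maxFun {d : ℕ} (g : EuclideanSpace ℝ (Fin d) → ℝ≥0∞)
    (x : EuclideanSpace ℝ (Fin d)) : ℝ≥0∞ :=
  ⨆ (z : EuclideanSpace ℝ (Fin d)) (r : ℝ) (_ : x ∈ ball z r),
    (∫⁻ y in ball z r, g y) / volume (ball z r)

namespace RieszAux

variable {d : ℕ} {α : ℝ}

noncomputable def kern (d : ℕ) (α : ℝ) (y : EuclideanSpace ℝ (Fin d)) : ℝ≥0∞ :=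
  ENNReal.ofReal (‖y‖ ^ (α - (d : ℝ)))

lemma kern_meas : Measurable (kern d α) := by unfold kern; fun_prop

lemma kern_neg (y : EuclideanSpace ℝ (Fin d)) : kern d α (-y) = kern d α y := by simp [kern]

lemma kern_ne_zero {y : EuclideanSpace ℝ (Fin d)} (hy : y ≠ 0) : kern d α y ≠ 0 := by
  simp only [kern, ne_eq, ENNReal.ofReal_eq_zero, not_le]
  exact Real.rpow_pos_of_pos (norm_pos_iff.2 hy) _

lemma riesz_eq (g : EuclideanSpace ℝ (Fin d) → ℝ≥0∞) (x) :
    riesz α g x = ∫⁻ y, g (x + y) * kern d α y := rfl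

lemma riesz_meas {g : EuclideanSpace ℝ (Fin d) → ℝ≥0∞} (hg : Measurable g) :
    Measurable (riesz α g) := by
  have : Measurable fun p : (EuclideanSpace ℝ (Fin d)) × (EuclideanSpace ℝ (Fin d)) =>
      g (p.1 + p.2) * kern d α p.2 :=
    (hg.comp measurable_add).mul (kern_meas.comp measurable_snd)
  exact this.lintegral_prod_right'

lemma riesz_congr_ae {g g' : EuclideanSpace ℝ (Fin d) → ℝ≥0∞} (h : g =ᵐ[volume] g') (x) :
    riesz α g x = riesz α g' x := by
  refine lintegral_congr_ae ?_
  have hqmp : Measure.QuasiMeasurePreserving (fun y : EuclideanSpace ℝ (Fin d) => x + y)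
      volume volume := (measurePreserving_add_left volume x).quasiMeasurePreserving
  filter_upwards [hqmp.ae_eq_comp h] with y hy
  simp only [Function.comp] at hy
  rw [hy]

lemma riesz_zero_of_ae_zero {g : EuclideanSpace ℝ (Fin d) → ℝ≥0∞}
    (h : g =ᵐ[volume] 0) (x) : riesz α g x = 0 := by
  rw [riesz_congr_ae h x]
  simp [riesz]

lemma riesz_selfadj {g h : EuclideanSpace ℝ (Fin d) → ℝ≥0∞}
    (hg : Measurable g) (hh : Measurable h) :
    ∫⁻ x, g x * riesz α h x = ∫⁻ x, h x * riesz α g x := by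
  have m1 : Measurable (Function.uncurry fun x y : EuclideanSpace ℝ (Fin d) =>
      g x * (h (x + y) * kern d α y)) := by
    apply Measurable.mul (hg.comp measurable_fst)
    exact (hh.comp measurable_add).mul (kern_meas.comp measurable_snd)
  have m2 : Measurable (Function.uncurry fun y x : EuclideanSpace ℝ (Fin d) =>
      g (x - y) * h x * kern d α y) := by
    apply Measurable.mul
    · exact (hg.comp ((measurable_snd).sub measurable_fst)).mul (hh.comp measurable_snd)
    · exact kern_meas.comp measurable_fst
  calc ∫⁻ x, g x * riesz α h x
      = ∫⁻ x, ∫⁻ y, g x * (h (x + y) * kern d α y) := by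
        refine lintegral_congr fun x => ?_
        rw [riesz_eq, lintegral_const_mul]
        exact (hh.comp (measurable_const_add x)).mul kern_meas
    _ = ∫⁻ y, ∫⁻ x, g x * (h (x + y) * kern d α y) := by
        exact lintegral_lintegral_swap m1.aemeasurable
    _ = ∫⁻ y, ∫⁻ x, g (x - y) * h x * kern d α y := by
        refine lintegral_congr fun y => ?_
        rw [← lintegral_add_right_eq_self (fun x => g (x - y) * h x * kern d α y) y]
        refine lintegral_congr fun x => ?_
        simp [mul_assoc, mul_comm]
        ring
    _ = ∫⁻ x, ∫⁻ y, g (x - y) * h x * kern d α y := by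
        exact lintegral_lintegral_swap (f := fun y x => g (x - y) * h x * kern d α y)
          m2.aemeasurable
    _ = ∫⁻ x, h x * ∫⁻ y, g (x - y) * kern d α y := by
        refine lintegral_congr fun x => ?_
        rw [← lintegral_const_mul]
        · refine lintegral_congr fun y => ?_; ring
        · exact (hg.comp ((measurable_const_sub x))).mul kern_meas
    _ = ∫⁻ x, h x * riesz α g x := by
        refine lintegral_congr fun x => ?_
        congr 1
        rw [riesz_eq]
        calc ∫⁻ y, g (x - y) * kern d α y
            = ∫⁻ y, (fun z => g (x + z) * kern d α z) (-y) := by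
              refine lintegral_congr fun y => ?_
              simp only
              rw [kern_neg, sub_eq_add_neg]
          _ = ∫⁻ y, g (x + y) * kern d α y :=
              (Measure.measurePreserving_neg
                (volume : Measure (EuclideanSpace ℝ (Fin d)))).lintegral_comp
                ((hg.comp (measurable_const_add x)).mul kern_meas)

variable (hzero : volume ({0} : Set (EuclideanSpace ℝ (Fin d))) = 0)

include hzero in
lemma riesz_pos {g : EuclideanSpace ℝ (Fin d) → ℝ≥0∞} (hg : Measurable g)
    (hsupp : volume (Function.support g) ≠ 0) (x) : riesz α g x ≠ 0 := by
  have hm : Measurable fun y => g (x + y) * kern d α y :=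
    ((hg.comp (measurable_const_add x) : Measurable fun y => g (x + y))).mul kern_meas
  rw [riesz_eq, ← pos_iff_ne_zero, lintegral_pos_iff_support hm]
  have hsub : ((fun y => x + y) ⁻¹' Function.support g) \ {0}
      ⊆ Function.support fun y => g (x + y) * kern d α y := by
    rintro y ⟨hy1, hy2⟩
    exact mul_ne_zero hy1 (kern_ne_zero (by simpa using hy2))
  have h0 : volume (((fun y => x + y) ⁻¹' Function.support g) \ ({0} : Set _))
      = volume ((fun y => x + y) ⁻¹' Function.support g) :=
    measure_diff_null hzero
  rw [pos_iff_ne_zero]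
  intro hc
  apply hsupp
  have := measure_mono (μ := (volume : Measure (EuclideanSpace ℝ (Fin d)))) hsub
  rw [hc, nonpos_iff_eq_zero] at this
  rw [h0, measure_preimage_add] at this
  exact this

include hzero in
lemma riesz_top {g : EuclideanSpace ℝ (Fin d) → ℝ≥0∞} (hg : Measurable g)
    (hT : volume {z | g z = ∞} ≠ 0) (x) : riesz α g x = ∞ := by
  rw [riesz_eq]
  have hm : Measurable fun y => g (x + y) * kern d α y :=
    ((hg.comp (measurable_const_add x) : Measurable fun y => g (x + y))).mul kern_meas
  apply lintegral_eq_top_of_measure_eq_top_ne_zero hm.aemeasurable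
  have hsub : ((fun y => x + y) ⁻¹' {z | g z = ∞}) \ ({0} : Set _)
      ⊆ {y | g (x + y) * kern d α y = ∞} := by
    rintro y ⟨hy1, hy2⟩
    simp only [Set.mem_preimage, Set.mem_setOf_eq] at hy1 ⊢
    rw [hy1]
    exact ENNReal.top_mul (kern_ne_zero (by simpa using hy2))
  intro hc
  apply hT
  have := measure_mono (μ := (volume : Measure (EuclideanSpace ℝ (Fin d)))) hsub
  rw [hc, nonpos_iff_eq_zero] at this
  rw [measure_diff_null hzero, measure_preimage_add] at this
  exact this

lemma riesz_withDensity {g : EuclideanSpace ℝ (Fin d) → ℝ≥0∞} (hg : Measurable g) (x) :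
    riesz α g x = ∫⁻ y, g (x + y) ∂((volume : Measure (EuclideanSpace ℝ (Fin d))).withDensity
      (kern d α)) := by
  have hmg : Measurable fun y => g (x + y) := hg.comp (measurable_const_add x)
  rw [riesz_eq, lintegral_withDensity_eq_lintegral_mul volume kern_meas hmg]
  exact lintegral_congr fun y => (mul_comm _ _)

lemma riesz_holder {r r' : ℝ} (hr : 1 < r) (hr' : r' = r / (r - 1))
    {u A : EuclideanSpace ℝ (Fin d) → ℝ≥0∞} (hu : Measurable u) (hA : Measurable A)
    (hAe : ∀ᵐ z ∂(volume : Measure (EuclideanSpace ℝ (Fin d))), A z ≠ 0 ∧ A z ≠ ∞) (x) :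
    riesz α u x ≤ (riesz α (fun z => u z ^ r / A z) x) ^ (1 / r) *
      (riesz α (fun z => A z ^ (1 / (r - 1))) x) ^ (1 / r') := by
  have hr0 : (0:ℝ) < r := by linarith
  have hr1 : (0:ℝ) < r - 1 := by linarith
  have hconj : Real.HolderConjugate r r' := by
    exact (Real.holderConjugate_iff_eq_conjExponent hr).2 hr'
  set ν := ((volume : Measure (EuclideanSpace ℝ (Fin d))).withDensity (kern d α)) with hν
  have hae : ∀ᵐ y ∂ν, u (x + y) ≤
      ((u (x + y)) ^ r / A (x + y)) ^ (1 / r) * (A (x + y)) ^ (1 / r) := by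
    have hqmp : Measure.QuasiMeasurePreserving (fun y : EuclideanSpace ℝ (Fin d) => x + y)
        volume volume := (measurePreserving_add_left volume x).quasiMeasurePreserving
    have h1 : ∀ᵐ y ∂(volume : Measure (EuclideanSpace ℝ (Fin d))),
        A (x + y) ≠ 0 ∧ A (x + y) ≠ ∞ := hqmp.ae (by exact hAe)
    have h2 := (withDensity_absolutelyContinuous
      (volume : Measure (EuclideanSpace ℝ (Fin d))) (kern d α)).ae_le h1
    filter_upwards [h2] with y hy
    rcases hy with ⟨h0, htop⟩
    rw [← ENNReal.mul_rpow_of_nonneg _ _ (by positivity : (0:ℝ) ≤ 1 / r),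
      ENNReal.div_mul_cancel h0 htop, ← ENNReal.rpow_mul,
      mul_one_div, div_self (ne_of_gt hr0), ENNReal.rpow_one]
  have hmu : Measurable fun y => (u (x + y) ^ r / A (x + y)) ^ (1 / r) := by fun_prop
  have hmA : Measurable fun y => (A (x + y)) ^ (1 / r) := by fun_prop
  calc riesz α u x = ∫⁻ y, u (x + y) ∂ν := riesz_withDensity hu x
    _ ≤ ∫⁻ y, ((fun y => (u (x + y) ^ r / A (x + y)) ^ (1 / r)) *
          (fun y => (A (x + y)) ^ (1 / r))) y ∂ν := lintegral_mono_ae hae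
    _ ≤ (∫⁻ y, ((u (x + y) ^ r / A (x + y)) ^ (1 / r)) ^ r ∂ν) ^ (1 / r) *
          (∫⁻ y, ((A (x + y)) ^ (1 / r)) ^ r' ∂ν) ^ (1 / r') :=
        ENNReal.lintegral_mul_le_Lp_mul_Lq ν hconj hmu.aemeasurable hmA.aemeasurable
    _ = (riesz α (fun z => u z ^ r / A z) x) ^ (1 / r) *
          (riesz α (fun z => A z ^ (1 / (r - 1))) x) ^ (1 / r') := by
        congr 1
        · congr 1
          rw [riesz_withDensity (by fun_prop : Measurable fun z => u z ^ r / A z) x]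
          refine lintegral_congr fun y => ?_
          rw [← ENNReal.rpow_mul, one_div, inv_mul_cancel₀ (ne_of_gt hr0), ENNReal.rpow_one]
        · congr 1
          rw [riesz_withDensity (by fun_prop : Measurable fun z => A z ^ (1 / (r - 1))) x]
          refine lintegral_congr fun y => ?_
          rw [← ENNReal.rpow_mul]
          congr 1
          rw [hr']
          field_simp

end RieszAux
open RieszAux

theorem riesz_dual_norm_bound
    (d : ℕ) (hd : 1 ≤ d) (α r p : ℝ) (hα0 : 0 < α) (hαd : α < d)
    (hαr : α ≤ r) (hr : 1 < r) (hrp : r < p) (hpd : p ≤ d)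
    (γ r' : ℝ) (hγ : 0 < γ) (hr' : r' = r / (r - 1))
    (hγ1 : (1 + γ) * r ≤ p) (hγ2 : 1 + γ * r' ≤ p) (hγ3 : 1 + γ ≤ r)
    (b : EuclideanSpace ℝ (Fin d) → ℝ) (hbm : Measurable b) (hb0 : ∀ x, 0 ≤ b x)
    (f : EuclideanSpace ℝ (Fin d) → ℝ) (hf : MemLp f (ENNReal.ofReal r) volume)
    (hf0 : ∀ x, 0 ≤ f x) :
    (∫⁻ x, (riesz α (fun y => ENNReal.ofReal (b y ^ r) *
        (riesz α (fun z => ENNReal.ofReal (f z)) y) ^ (r - 1)) x) ^ r') ^ (1 / r') ≤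
      (∫⁻ x, ENNReal.ofReal (b x ^ (r - γ * r')) *
          (riesz α (fun z => ENNReal.ofReal (f z)) x) ^ r *
          riesz α (fun y =>
            (riesz α (fun z => ENNReal.ofReal (b z ^ ((1 + γ) * r))) y) ^
              (1 / (r - 1))) x) ^ ((r - 1) / r) := by
  classical
  have hr0 : (0:ℝ) < r := by linarith
  have hr1 : (0:ℝ) < r - 1 := by linarith
  have hr'pos : (0:ℝ) < r' := by rw [hr']; positivity
  have hsum : 1 / r' + 1 / r = 1 := by rw [hr']; field_simp; ring
  have hsum' : 1 / r' = (r - 1) / r := by rw [hr']; field_simp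
  have hzero : volume ({0} : Set (EuclideanSpace ℝ (Fin d))) = 0 := by
    haveI : Nontrivial (EuclideanSpace ℝ (Fin d)) := by
      refine ⟨0, EuclideanSpace.single ⟨0, hd⟩ 1, ?_⟩
      intro hcon
      have := congrArg (fun v : EuclideanSpace ℝ (Fin d) => v ⟨0, hd⟩) hcon
      simp [EuclideanSpace.single] at this
    exact measure_singleton 0
  obtain ⟨fm, hfmm, hfe⟩ : ∃ fm, Measurable fm ∧ f =ᵐ[volume] fm :=
    ⟨hf.1.aemeasurable.mk f, hf.1.aemeasurable.measurable_mk, hf.1.aemeasurable.ae_eq_mk⟩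
  set v : EuclideanSpace ℝ (Fin d) → ℝ≥0∞ := riesz α (fun z => ENNReal.ofReal (f z)) with hvdef
  have hveq : v = riesz α (fun z => ENNReal.ofReal (fm z)) := by
    funext x
    exact riesz_congr_ae (by filter_upwards [hfe] with z hz; rw [hz]) x
  have hvm : Measurable v := by rw [hveq]; exact riesz_meas (by fun_prop)
  set h : EuclideanSpace ℝ (Fin d) → ℝ≥0∞ :=
    fun y => ENNReal.ofReal (b y ^ r) * v y ^ (r - 1) with hhdef
  have hhm : Measurable h := by
    apply Measurable.mul
    · fun_prop
    · exact hvm.pow_const _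
  set w : EuclideanSpace ℝ (Fin d) → ℝ≥0∞ := riesz α h with hwdef
  have hwm : Measurable w := riesz_meas hhm
  set A : EuclideanSpace ℝ (Fin d) → ℝ≥0∞ :=
    riesz α (fun z => ENNReal.ofReal (b z ^ ((1 + γ) * r))) with hAdef
  have hAm : Measurable A := riesz_meas (by fun_prop)
  set C : EuclideanSpace ℝ (Fin d) → ℝ≥0∞ :=
    riesz α (fun y => A y ^ (1 / (r - 1))) with hCdef
  have hCm : Measurable C := riesz_meas (hAm.pow_const _)
  set I : ℝ≥0∞ := ∫⁻ x, ENNReal.ofReal (b x ^ (r - γ * r')) * v x ^ r * C x with hIdef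
  rw [show (r - 1) / r = 1 / r' from hsum'.symm]
  suffices hJI : (∫⁻ x, w x ^ r') ≤ I by
    exact ENNReal.rpow_le_rpow hJI (by positivity)
  -- trivial case: b vanishes a.e.
  by_cases hbz : volume {z | b z ≠ 0} = 0
  · have hbae : ∀ᵐ z ∂(volume : Measure (EuclideanSpace ℝ (Fin d))), b z = 0 := by
      rw [ae_iff]; exact hbz
    have hhae : h =ᵐ[volume] 0 := by
      filter_upwards [hbae] with z hz
      simp [hhdef, hz, Real.zero_rpow (ne_of_gt hr0)]
    have hw0 : ∀ x, w x = 0 := fun x => riesz_zero_of_ae_zero hhae x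
    simp only [hw0, ENNReal.zero_rpow_of_pos hr'pos, lintegral_zero]
    exact zero_le
  -- trivial case: f vanishes a.e.
  by_cases hfz : volume (Function.support fun z => ENNReal.ofReal (fm z)) = 0
  · have hfae : (fun z => ENNReal.ofReal (fm z)) =ᵐ[volume] 0 := by
      rw [Filter.EventuallyEq, ae_iff]
      exact hfz
    have hv0 : ∀ x, v x = 0 := fun x => by
      rw [hveq]; exact riesz_zero_of_ae_zero hfae x
    have hh0 : ∀ y, h y = 0 := fun y => by
      simp [hhdef, hv0 y, ENNReal.zero_rpow_of_pos hr1]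
    have hw0 : ∀ x, w x = 0 := fun x => by
      rw [hwdef, riesz_eq]
      simp [hh0]
    simp only [hw0, ENNReal.zero_rpow_of_pos hr'pos, lintegral_zero]
    exact zero_le
  -- trivial case: I = ⊤
  by_cases hItop : I = ⊤
  · rw [hItop]; exact le_top
  -- main case
  have hbsupp : volume (Function.support fun z => ENNReal.ofReal (b z ^ ((1 + γ) * r))) ≠ 0 := by
    have hset : (Function.support fun z => ENNReal.ofReal (b z ^ ((1 + γ) * r)))
        = {z | b z ≠ 0} := by
      ext z
      simp only [Function.mem_support, Set.mem_setOf_eq, ne_eq, ENNReal.ofReal_eq_zero, not_le]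
      constructor
      · intro hlt hbz0
        rw [hbz0, Real.zero_rpow (by positivity : (1 + γ) * r ≠ 0)] at hlt
        exact lt_irrefl 0 hlt
      · intro hbz0
        exact Real.rpow_pos_of_pos ((hb0 z).lt_of_ne (Ne.symm hbz0)) _
    rw [hset]; exact hbz
  have hApos : ∀ x, A x ≠ 0 := fun x =>
    riesz_pos hzero (by fun_prop) hbsupp x
  have hvpos : ∀ x, v x ≠ 0 := fun x => by
    rw [hveq]; exact riesz_pos hzero (by fun_prop) hfz x
  have hImeas : Measurable fun x => ENNReal.ofReal (b x ^ (r - γ * r')) * v x ^ r * C x := by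
    apply Measurable.mul
    · apply Measurable.mul
      · fun_prop
      · exact hvm.pow_const _
    · exact hCm
  have hAfin : ∀ᵐ z ∂(volume : Measure (EuclideanSpace ℝ (Fin d))), A z ≠ ⊤ := by
    by_contra hcon
    have hT : volume {z | A z = ⊤} ≠ 0 := by
      intro h0
      apply hcon
      rw [ae_iff]
      convert h0 using 2
      ext z
      simp
    have hCtop : ∀ x, C x = ⊤ := fun x => by
      rw [hCdef]
      refine riesz_top hzero (hAm.pow_const _) ?_ x
      intro hc
      apply hT
      refine measure_mono_null ?_ hc
      intro z hz
      simp only [Set.mem_setOf_eq] at hz ⊢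
      rw [hz]
      exact ENNReal.top_rpow_of_pos (by positivity)
    apply hItop
    rw [hIdef]
    apply lintegral_eq_top_of_measure_eq_top_ne_zero hImeas.aemeasurable
    intro hc
    apply hbz
    refine measure_mono_null ?_ hc
    intro z hz
    simp only [Set.mem_setOf_eq] at hz ⊢
    have hbpos : 0 < b z := (hb0 z).lt_of_ne (Ne.symm hz)
    have h1 : ENNReal.ofReal (b z ^ (r - γ * r')) ≠ 0 := by
      simp only [ne_eq, ENNReal.ofReal_eq_zero, not_le]
      exact Real.rpow_pos_of_pos hbpos _
    have h2 : v z ^ r ≠ 0 := by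
      intro hc2
      rcases (ENNReal.rpow_eq_zero_iff).1 hc2 with ⟨hv0, _⟩ | ⟨_, hneg⟩
      · exact hvpos z hv0
      · linarith
    rw [hCtop z, ENNReal.mul_top (mul_ne_zero h1 h2)]
  have hAe : ∀ᵐ z ∂(volume : Measure (EuclideanSpace ℝ (Fin d))), A z ≠ 0 ∧ A z ≠ ⊤ :=
    hAfin.mono fun z hz => ⟨hApos z, hz⟩
  -- truncation sequence
  set m : ℕ → EuclideanSpace ℝ (Fin d) → ℝ≥0∞ :=
    fun n x => (ball (0 : EuclideanSpace ℝ (Fin d)) n).indicator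
      (fun x => min (w x) n) x with hmdef
  have hmmeas : ∀ n, Measurable (m n) := fun n =>
    (hwm.min measurable_const).indicator measurableSet_ball
  have hmle : ∀ n x, m n x ≤ w x := by
    intro n x
    by_cases hx : x ∈ ball (0 : EuclideanSpace ℝ (Fin d)) (n : ℝ)
    · rw [hmdef]; simp only [Set.indicator_of_mem hx]; exact min_le_left _ _
    · rw [hmdef]; simp only [Set.indicator_of_notMem hx]; exact zero_le
  have hmbd : ∀ n x, m n x ≤ (n : ℝ≥0∞) := by
    intro n x
    by_cases hx : x ∈ ball (0 : EuclideanSpace ℝ (Fin d)) (n : ℝ)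
    · rw [hmdef]; simp only [Set.indicator_of_mem hx]; exact min_le_right _ _
    · rw [hmdef]; simp only [Set.indicator_of_notMem hx]; exact zero_le
  have hmfin : ∀ n x, m n x ≠ ⊤ := fun n x =>
    (lt_of_le_of_lt (hmbd n x) (ENNReal.natCast_lt_top n)).ne
  have hmono : Monotone m := by
    intro n n' hnn' x
    by_cases hx : x ∈ ball (0 : EuclideanSpace ℝ (Fin d)) (n : ℝ)
    · have hx' : x ∈ ball (0 : EuclideanSpace ℝ (Fin d)) (n' : ℝ) :=
        ball_subset_ball (by exact_mod_cast hnn') hx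
      rw [hmdef]; simp only [Set.indicator_of_mem hx, Set.indicator_of_mem hx']
      exact min_le_min le_rfl (by exact_mod_cast hnn')
    · rw [hmdef]; simp only [Set.indicator_of_notMem hx]; exact zero_le
  have hmsup : ∀ x, (⨆ n, m n x) = w x := by
    intro x
    refine le_antisymm (iSup_le fun n => hmle n x) ?_
    have hwx : w x = w x ⊓ ⨆ (k : ℕ), (k : ℝ≥0∞) := by
      rw [ENNReal.iSup_natCast]; simp
    rw [hwx, inf_iSup_eq]
    refine iSup_le fun k => ?_
    have hxN : x ∈ ball (0 : EuclideanSpace ℝ (Fin d)) ((k ⊔ (⌈‖x‖⌉₊ + 1) : ℕ) : ℝ) := by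
      rw [mem_ball_zero_iff]
      calc ‖x‖ ≤ (⌈‖x‖⌉₊ : ℝ) := Nat.le_ceil _
        _ < ((⌈‖x‖⌉₊ + 1 : ℕ) : ℝ) := by exact_mod_cast Nat.lt_succ_self _
        _ ≤ ((k ⊔ (⌈‖x‖⌉₊ + 1) : ℕ) : ℝ) := by exact_mod_cast le_sup_right
    refine le_trans ?_ (le_iSup _ (k ⊔ (⌈‖x‖⌉₊ + 1)))
    rw [hmdef]; simp only [Set.indicator_of_mem hxN]
    exact min_le_min le_rfl (by exact_mod_cast le_sup_left)
  -- the key estimate for each truncation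
  have key : ∀ n : ℕ, (∫⁻ x, m n x ^ r') ≤ I := by
    intro n
    set u : EuclideanSpace ℝ (Fin d) → ℝ≥0∞ := fun x => m n x ^ (1 / (r - 1)) with hudef
    have hum : Measurable u := (hmmeas n).pow_const _
    set Rd : EuclideanSpace ℝ (Fin d) → ℝ≥0∞ := riesz α (fun z => u z ^ r / A z) with hRd
    have hRdm : Measurable Rd := riesz_meas ((hum.pow_const _).div hAm)
    set Jn : ℝ≥0∞ := ∫⁻ x, m n x ^ r' with hJn
    have huJn : (∫⁻ z, u z ^ r) = Jn := by
      refine lintegral_congr fun z => ?_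
      rw [hudef]
      simp only
      rw [← ENNReal.rpow_mul]
      congr 1
      rw [hr']
      field_simp
    have hJnfin : Jn ≠ ⊤ := by
      have hle : ∀ x, m n x ^ r' ≤ (ball (0 : EuclideanSpace ℝ (Fin d)) n).indicator
          (fun _ => (n : ℝ≥0∞) ^ r') x := by
        intro x
        by_cases hx : x ∈ ball (0 : EuclideanSpace ℝ (Fin d)) (n : ℝ)
        · rw [Set.indicator_of_mem hx]
          exact ENNReal.rpow_le_rpow (hmbd n x) hr'pos.le
        · rw [Set.indicator_of_notMem hx]
          have hm0 : m n x = 0 := by rw [hmdef]; simp only [Set.indicator_of_notMem hx]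
          rw [hm0, ENNReal.zero_rpow_of_pos hr'pos]
      refine ne_top_of_le_ne_top ?_ (lintegral_mono hle)
      rw [lintegral_indicator_const measurableSet_ball]
      exact (ENNReal.mul_lt_top (ENNReal.rpow_lt_top_of_nonneg hr'pos.le
        (ENNReal.natCast_ne_top n)) measure_ball_lt_top).ne
    -- Step A : duality
    have stepA : Jn ≤ ∫⁻ x, h x * riesz α u x := by
      have hpt : ∀ x, m n x ^ r' ≤ u x * w x := by
        intro x
        by_cases hm0 : m n x = 0
        · rw [hm0, ENNReal.zero_rpow_of_pos hr'pos]; exact zero_le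
        · have heq : m n x ^ r' = m n x ^ (1 / (r - 1)) * m n x := by
            rw [show r' = 1 / (r - 1) + 1 by rw [hr']; field_simp; ring,
              ENNReal.rpow_add _ _ hm0 (hmfin n x), ENNReal.rpow_one]
          rw [heq]
          exact mul_le_mul_right (hmle n x) _
      calc Jn ≤ ∫⁻ x, u x * w x := lintegral_mono hpt
        _ = ∫⁻ x, h x * riesz α u x := by
            rw [hwdef]
            exact riesz_selfadj hum hhm
    -- pointwise Hoelder factorization
    have hconj' : Real.HolderConjugate r' r := by
      exact ((Real.holderConjugate_iff_eq_conjExponent hr).2 hr').symm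
    have hexp : (r - γ * r') * (1 / r') + (1 + γ) * r * (1 / r) = r := by
      rw [hr']; field_simp; ring
    have hvexp : r * (1 / r') = r - 1 := by rw [hr']; field_simp
    set F : EuclideanSpace ℝ (Fin d) → ℝ≥0∞ :=
      fun x => ENNReal.ofReal (b x ^ (r - γ * r')) * v x ^ r * C x with hF
    set G : EuclideanSpace ℝ (Fin d) → ℝ≥0∞ :=
      fun x => ENNReal.ofReal (b x ^ ((1 + γ) * r)) * Rd x with hG
    have hFm : Measurable F := hImeas
    have hGm : Measurable G := by
      apply Measurable.mul
      · fun_prop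
      · exact hRdm
    have hpt2 : ∀ x, h x * riesz α u x ≤ F x ^ (1 / r') * G x ^ (1 / r) := by
      intro x
      by_cases hbx : b x = 0
      · have hh0 : h x = 0 := by
          rw [hhdef]; simp [hbx, Real.zero_rpow (ne_of_gt hr0)]
        rw [hh0, zero_mul]; exact zero_le
      · have hbpos : 0 < b x := (hb0 x).lt_of_ne (Ne.symm hbx)
        have hHo := riesz_holder (α := α) hr hr' hum hAm hAe x
        rw [← hRd, ← hCdef] at hHo
        have hofReal : ENNReal.ofReal (b x ^ r) =
            ENNReal.ofReal (b x ^ ((r - γ * r') * (1 / r'))) *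
              ENNReal.ofReal (b x ^ ((1 + γ) * r * (1 / r))) := by
          rw [← ENNReal.ofReal_mul (by positivity), ← Real.rpow_add hbpos, hexp]
        have hv' : (v x ^ r) ^ (1 / r') = v x ^ (r - 1) := by
          rw [← ENNReal.rpow_mul, hvexp]
        calc h x * riesz α u x ≤ h x * (Rd x ^ (1 / r) * C x ^ (1 / r')) :=
              mul_le_mul_right hHo _
          _ = F x ^ (1 / r') * G x ^ (1 / r) := by
              rw [hF, hG, hhdef]
              simp only
              rw [ENNReal.mul_rpow_of_nonneg _ _ (by positivity : (0:ℝ) ≤ 1 / r'),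
                ENNReal.mul_rpow_of_nonneg _ _ (by positivity : (0:ℝ) ≤ 1 / r'),
                ENNReal.mul_rpow_of_nonneg _ _ (by positivity : (0:ℝ) ≤ 1 / r),
                ENNReal.ofReal_rpow_of_nonneg (by positivity) (by positivity : (0:ℝ) ≤ 1 / r'),
                ENNReal.ofReal_rpow_of_nonneg (by positivity) (by positivity : (0:ℝ) ≤ 1 / r),
                ← Real.rpow_mul (hb0 x), ← Real.rpow_mul (hb0 x), hv', hofReal]
              ring
    -- Step B : outer Hoelder
    have stepB : (∫⁻ x, h x * riesz α u x) ≤ I ^ (1 / r') * (∫⁻ x, G x) ^ (1 / r) := by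
      calc (∫⁻ x, h x * riesz α u x)
          ≤ ∫⁻ x, ((fun x => F x ^ (1 / r')) * fun x => G x ^ (1 / r)) x :=
            lintegral_mono fun x => hpt2 x
        _ ≤ (∫⁻ x, (F x ^ (1 / r')) ^ r') ^ (1 / r') * (∫⁻ x, (G x ^ (1 / r)) ^ r) ^ (1 / r) :=
            ENNReal.lintegral_mul_le_Lp_mul_Lq volume hconj'
              (hFm.pow_const _).aemeasurable (hGm.pow_const _).aemeasurable
        _ = I ^ (1 / r') * (∫⁻ x, G x) ^ (1 / r) := by
            congr 1
            · congr 1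
              rw [hIdef]
              refine lintegral_congr fun x => ?_
              rw [← ENNReal.rpow_mul, one_div, inv_mul_cancel₀ (ne_of_gt hr'pos),
                ENNReal.rpow_one]
            · congr 1
              refine lintegral_congr fun x => ?_
              rw [← ENNReal.rpow_mul, one_div, inv_mul_cancel₀ (ne_of_gt hr0),
                ENNReal.rpow_one]
    -- Step C : dualize back
    have stepC : (∫⁻ x, G x) ≤ Jn := by
      have hsa := riesz_selfadj (α := α)
        (g := fun x => ENNReal.ofReal (b x ^ ((1 + γ) * r)))
        (h := fun z => u z ^ r / A z) (by fun_prop) ((hum.pow_const _).div hAm)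
      rw [← hRd, ← hAdef] at hsa
      have hG' : (∫⁻ x, G x) = ∫⁻ z, (u z ^ r / A z) * A z := by
        rw [hG]
        exact hsa
      rw [hG', ← huJn]
      refine lintegral_mono fun z => ?_
      rw [div_eq_mul_inv, mul_assoc]
      calc u z ^ r * ((A z)⁻¹ * A z) ≤ u z ^ r * 1 :=
            mul_le_mul_right (ENNReal.inv_mul_le_one (A z)) _
        _ = u z ^ r := mul_one _
    -- combine
    have hcomb : Jn ≤ I ^ (1 / r') * Jn ^ (1 / r) :=
      le_trans stepA (le_trans stepB
        (mul_le_mul_right (ENNReal.rpow_le_rpow stepC (by positivity)) _))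
    by_cases hJ0 : Jn = 0
    · rw [hJ0]
      exact zero_le
    · have hJr : Jn ^ (1 / r') * Jn ^ (1 / r) = Jn := by
        rw [← ENNReal.rpow_add _ _ hJ0 hJnfin, hsum, ENNReal.rpow_one]
      have h2 : Jn ^ (1 / r') * Jn ^ (1 / r) ≤ I ^ (1 / r') * Jn ^ (1 / r) := by
        rw [hJr]; exact hcomb
      have hne0 : Jn ^ (1 / r) ≠ 0 := by
        intro hc
        rcases ENNReal.rpow_eq_zero_iff.1 hc with ⟨hc1, _⟩ | ⟨hc1, hc2⟩
        · exact hJ0 hc1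
        · exact hJnfin hc1
      have hnet : Jn ^ (1 / r) ≠ ⊤ := ENNReal.rpow_ne_top_of_nonneg (by positivity) hJnfin
      have h3 : Jn ^ (1 / r') ≤ I ^ (1 / r') := (ENNReal.mul_le_mul_iff_left hne0 hnet).mp h2
      exact (ENNReal.rpow_le_rpow_iff (by positivity : (0:ℝ) < 1 / r')).mp h3
  -- monotone convergence
  calc (∫⁻ x, w x ^ r') = ∫⁻ x, ⨆ n, (m n x) ^ r' := by
        refine lintegral_congr fun x => ?_
        rw [← hmsup x]
        refine Monotone.map_iSup_of_continuousAt
          ENNReal.continuous_rpow_const.continuousAt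
          (fun a b hab => ENNReal.rpow_le_rpow hab hr'pos.le) ?_
        simp [ENNReal.zero_rpow_of_pos hr'pos]
    _ = ⨆ n, ∫⁻ x, (m n x) ^ r' := lintegral_iSup (fun n => (hmmeas n).pow_const _)
          (fun n n' hnn' x => ENNReal.rpow_le_rpow (hmono hnn' x) hr'pos.le)
    _ ≤ I := iSup_le key
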